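/- Let n ≥ 2 be a natural number, let α = (3+√5)/2, and let α_n denote the unique real root of P_{2n}(x) = x^(2n) − x^(n+1) − x^n − x^(n−1) + 1 in the interval (2^(1/n), 3^(1/n)). Then α^(1/n) < α_n. -/

import Mathlib

/-- If `α_n` is the real root of `P_{2n}` in `(2^{1/n}, 3^{1/n})`, then `α^{1/n} < α_n`
where `α = (3+√5)/2`. -/
theorem alpha_rpow_lt_root (n : ℕ) (hn : 2 ≤ n) (αn : ℝ)
    (hmem : αn ∈ Set.Ioo ((2 : ℝ) ^ ((1 : ℝ) / (n : ℝ))) ((3 : ℝ) ^ ((1 : ℝ) / (n : ℝ))))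
    (hroot : αn ^ (2 * n) - αn ^ (n + 1) - αn ^ n - αn ^ (n - 1) + 1 = 0) :
    ((3 + Real.sqrt 5) / 2) ^ ((1 : ℝ) / (n : ℝ)) < αn := by
  obtain ⟨h2, h3⟩ := hmem
  have hnpos : (0 : ℝ) < n := by positivity
  have hinv : (0 : ℝ) < 1 / n := by positivity
  have hne : (n : ℝ) ≠ 0 := ne_of_gt hnpos
  have h1lt : (1 : ℝ) < (2 : ℝ) ^ ((1 : ℝ) / (n : ℝ)) :=
    Real.one_lt_rpow_iff_of_pos (by norm_num) |>.2 (Or.inl ⟨by norm_num, hinv⟩)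
  have hβ1 : (1 : ℝ) < αn := h1lt.trans h2
  have hβ0 : (0 : ℝ) < αn := by linarith
  set y := αn ^ n with hy
  -- y > 2
  have hy2 : (2 : ℝ) < y := by
    have := pow_lt_pow_left₀ h2 (by positivity) (by omega : n ≠ 0)
    have h2n : ((2 : ℝ) ^ ((1 : ℝ) / (n : ℝ))) ^ n = 2 := by
      rw [← Real.rpow_natCast ((2:ℝ) ^ ((1:ℝ)/(n:ℝ))), ← Real.rpow_mul (by norm_num)]
      field_simp
      simp
    rw [h2n] at this
    exact this
  have hypos : (0 : ℝ) < y := by linarith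
  -- the key quadratic relation: y^2 + 1 = (αn + 1 + 1/αn) * y
  have hpow1 : αn ^ (n - 1) * αn = y := by
    rw [hy, ← pow_succ]
    congr 1
    omega
  have hpow2 : αn ^ (n + 1) = y * αn := by rw [hy, pow_succ]
  have hpow3 : αn ^ (2 * n) = y ^ 2 := by rw [hy, ← pow_mul, Nat.mul_comm]
  have hquad : y ^ 2 + 1 = (αn + 1 + 1 / αn) * y := by
    have h4 : αn ^ (n - 1) = y / αn := by
      field_simp [← hpow1]
      exact hpow1
    rw [hpow2, hpow3, h4] at hroot
    field_simp at hroot ⊢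
    nlinarith [hroot]
  -- αn + 1/αn > 2 since αn > 1
  have hc : (3 : ℝ) < αn + 1 + 1 / αn := by
    have h0 : (0:ℝ) < (αn - 1) ^ 2 := pow_pos (by linarith) 2
    have h' : αn + 1 / αn > 2 := by
      rw [gt_iff_lt, ← sub_pos]
      have : αn + 1 / αn - 2 = (αn - 1) ^ 2 / αn := by field_simp; ring
      rw [this]; positivity
    linarith
  have hq : y ^ 2 - 3 * y + 1 > 0 := by nlinarith
  -- hence y > (3 + √5)/2
  have hs : Real.sqrt 5 ^ 2 = 5 := Real.sq_sqrt (by norm_num)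
  have hs2 : (2 : ℝ) < Real.sqrt 5 := by
    nlinarith [Real.sqrt_nonneg 5]
  have hαy : (3 + Real.sqrt 5) / 2 < y := by nlinarith
  -- transfer via rpow
  have hαpos : (0 : ℝ) < (3 + Real.sqrt 5) / 2 := by positivity
  have := Real.rpow_lt_rpow (le_of_lt hαpos) hαy hinv
  have hyid : y ^ ((1 : ℝ) / (n : ℝ)) = αn := by
    rw [hy, ← Real.rpow_natCast αn, ← Real.rpow_mul (le_of_lt hβ0)]
    field_simp
    simp
  rwa [hyid] at this
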